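/- Let T and T₁ be positive integers with T₁ ≤ T. Let X₁, X₂, … be i.i.d. 1-subgaussian real random variables and Y₁, Y₂, … be i.i.d. 1-subgaussian real random variables, independent of the X's, with Δ = E[X₁ − Y₁] > 0. Write X̄ₛ = (1/s)∑_{n=1}^s Xₙ and Ȳₛ = (1/s)∑_{n=1}^s Yₙ. Then ∑_{s=1}^{⌊T/2⌋} P(X̄ₛ − Ȳₛ ≤ √((8/s)·log⁺(T₁/(2s)))) ≤ 1 + 8·log⁺(T₁Δ²/4)/Δ² + 6/Δ² + 2√(8π·log⁺(T₁Δ²/4))/Δ². -/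

import Mathlib

open MeasureTheory ProbabilityTheory Real
open scoped ENNReal

/-- `Z` is 1-subgaussian: `E[exp(λZ − λE[Z])] ≤ exp(λ²/2)` for all `λ ∈ ℝ`
(with the integrability of the moment generating function). -/
def IsOneSubgaussian {Ω : Type*} [MeasurableSpace Ω] (μ : Measure Ω) (Z : Ω → ℝ) : Prop :=
  Integrable Z μ ∧ ∀ l : ℝ,
    Integrable (fun ω => Real.exp (l * Z ω - l * (∫ ω', Z ω' ∂μ))) μ ∧
    (∫ ω, Real.exp (l * Z ω - l * (∫ ω', Z ω' ∂μ)) ∂μ) ≤ Real.exp (l ^ 2 / 2)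

/-- `log⁺ x = max {0, log x}`. -/
noncomputable def logPlus (x : ℝ) : ℝ := max 0 (Real.log x)

lemma logPlus_nonneg (x : ℝ) : 0 ≤ logPlus x := le_max_left _ _

lemma logPlus_mono {x y : ℝ} (hx : 0 < x) (h : x ≤ y) : logPlus x ≤ logPlus y :=
  max_le_max le_rfl (Real.log_le_log hx h)

lemma isOneSubgaussian_mgf {Ω : Type*} [MeasurableSpace Ω] {μ : Measure Ω} {Z : Ω → ℝ}
    (h : IsOneSubgaussian μ Z) (t : ℝ) :
    Integrable (fun ω => Real.exp (t * Z ω)) μ ∧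
      mgf Z μ t ≤ Real.exp (t ^ 2 / 2 + t * ∫ ω, Z ω ∂μ) := by
  obtain ⟨h1, h2⟩ := h.2 t
  set E := ∫ ω, Z ω ∂μ with hE
  have hfun : ∀ ω, Real.exp (t * Z ω) = Real.exp (t * Z ω - t * E) * Real.exp (t * E) := by
    intro ω; rw [← Real.exp_add]; ring_nf
  constructor
  · refine (h1.mul_const (Real.exp (t * E))).congr (Filter.Eventually.of_forall fun ω => ?_)
    exact (hfun ω).symm
  · calc mgf Z μ t = ∫ ω, Real.exp (t * Z ω - t * E) * Real.exp (t * E) ∂μ := by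
          unfold mgf; exact integral_congr_ae (Filter.Eventually.of_forall fun ω => hfun ω)
    _ = (∫ ω, Real.exp (t * Z ω - t * E) ∂μ) * Real.exp (t * E) := integral_mul_const _ _
    _ ≤ Real.exp (t ^ 2 / 2) * Real.exp (t * E) :=
        mul_le_mul_of_nonneg_right h2 (Real.exp_nonneg _)
    _ = Real.exp (t ^ 2 / 2 + t * E) := (Real.exp_add _ _).symm

-- Gaussian half-line integrals
lemma int_gauss : ∫ u in Set.Ioi (0:ℝ), Real.exp (-(1/4) * u ^ 2) = Real.sqrt Real.pi := by
  rw [integral_gaussian_Ioi]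
  rw [show Real.pi / (1/4) = 4 * Real.pi by ring]
  rw [show (4:ℝ) * Real.pi = 2^2 * Real.pi by norm_num]
  rw [Real.sqrt_mul (by positivity), Real.sqrt_sq (by norm_num)]
  ring

lemma int_mul_gauss : ∫ u in Set.Ioi (0:ℝ), u * Real.exp (-(1/4) * u ^ 2) = 2 := by
  have hderiv : ∀ x ∈ Set.Ioi (0:ℝ),
      HasDerivAt (fun u : ℝ => -2 * Real.exp (-(1/4) * u ^ 2))
        (x * Real.exp (-(1/4) * x ^ 2)) x := by
    intro x _
    have h1 : HasDerivAt (fun u : ℝ => -(1/4) * u ^ 2) (-(1/4) * (2 * x)) x := by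
      simpa using ((hasDerivAt_pow 2 x).const_mul (-(1/4:ℝ)))
    have h2 := (h1.exp).const_mul (-2 : ℝ)
    exact h2.congr_deriv (by ring)
  have hint : IntegrableOn (fun u : ℝ => u * Real.exp (-(1/4) * u ^ 2)) (Set.Ioi 0) := by
    have := integrable_mul_exp_neg_mul_sq (b := (1/4:ℝ)) (by norm_num)
    exact (this.congr (Filter.Eventually.of_forall fun x => by ring_nf)).integrableOn
  have htend : Filter.Tendsto (fun u : ℝ => -2 * Real.exp (-(1/4) * u ^ 2))
      Filter.atTop (nhds 0) := by
    have h0 : Filter.Tendsto (fun u : ℝ => -(1/4) * u ^ 2) Filter.atTop Filter.atBot := by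
      apply Filter.Tendsto.const_mul_atTop_of_neg (by norm_num)
      exact Filter.tendsto_pow_atTop (by norm_num)
    have := (Real.tendsto_exp_atBot.comp h0).const_mul (-2 : ℝ)
    simpa using this
  have := integral_Ioi_of_hasDerivAt_of_tendsto
    (Continuous.continuousWithinAt (by continuity)) hderiv hint htend
  rw [this]; norm_num

lemma concentration {Ω : Type*} [MeasurableSpace Ω] (μ : Measure Ω) [IsProbabilityMeasure μ]
    (X Y : ℕ → Ω → ℝ) (hmeasX : ∀ i, Measurable (X i)) (hmeasY : ∀ i, Measurable (Y i))
    (hindep : iIndepFun (Sum.elim X Y) μ)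
    (hidentX : ∀ i, IdentDistrib (X i) (X 0) μ μ)
    (hidentY : ∀ i, IdentDistrib (Y i) (Y 0) μ μ)
    (hsubX : ∀ i, IsOneSubgaussian μ (X i))
    (hsubY : ∀ i, IsOneSubgaussian μ (Y i))
    (Δ : ℝ) (hΔ : Δ = ∫ ω, (X 0 ω - Y 0 ω) ∂μ)
    (s : ℕ) (hs : 0 < s) (e : ℝ) (he : e ≤ Δ) :
    μ {ω | (∑ n ∈ Finset.range s, X n ω) / s - (∑ n ∈ Finset.range s, Y n ω) / s ≤ e}
      ≤ ENNReal.ofReal (Real.exp (-(s : ℝ) * (Δ - e) ^ 2 / 4)) := by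
  classical
  set g : ℕ ⊕ ℕ → Ω → ℝ := Sum.elim X (fun n ω => -(Y n ω)) with hg
  have hg_meas : ∀ i, Measurable (g i) := by
    rintro (n | n)
    · exact hmeasX n
    · exact (hmeasY n).neg
  have hφ : ∀ i : ℕ ⊕ ℕ, Measurable ((fun i => Sum.elim (fun _ : ℕ => (id : ℝ → ℝ))
      (fun _ : ℕ => (Neg.neg : ℝ → ℝ)) i) i) := by
    rintro (n | n)
    · exact measurable_id
    · exact measurable_neg
  have hg_indep : iIndepFun g μ := by
    have h := hindep.comp (fun i => Sum.elim (fun _ : ℕ => (id : ℝ → ℝ))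
      (fun _ : ℕ => (Neg.neg : ℝ → ℝ)) i) hφ
    convert h using 1
    funext i
    cases i <;> rfl
  set F : Finset (ℕ ⊕ ℕ) := (Finset.range s).map ⟨Sum.inl, Sum.inl_injective⟩ ∪
    (Finset.range s).map ⟨Sum.inr, Sum.inr_injective⟩ with hF
  have hdisj : Disjoint ((Finset.range s).map ⟨Sum.inl, Sum.inl_injective⟩)
      ((Finset.range s).map ⟨Sum.inr, Sum.inr_injective⟩) := by
    simp [Finset.disjoint_left]
  have hFsum : ∀ ω, (∑ i ∈ F, g i) ω
      = (∑ n ∈ Finset.range s, X n ω) - (∑ n ∈ Finset.range s, Y n ω) := by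
    intro ω
    rw [Finset.sum_apply, hF, Finset.sum_union hdisj, Finset.sum_map, Finset.sum_map]
    simp [g, sub_eq_add_neg]
  have hspos : (0:ℝ) < (s:ℝ) := by exact_mod_cast hs
  have hset : {ω | (∑ n ∈ Finset.range s, X n ω) / s - (∑ n ∈ Finset.range s, Y n ω) / s ≤ e}
      = {ω | (∑ i ∈ F, g i) ω ≤ (s:ℝ) * e} := by
    ext ω
    simp only [Set.mem_setOf_eq, hFsum ω, div_sub_div_same]
    rw [div_le_iff₀ hspos, mul_comm]
  have hint : ∀ (t : ℝ) (i : ℕ ⊕ ℕ), Integrable (fun ω => Real.exp (t * g i ω)) μ := by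
    intro t i
    cases i with
    | inl n => exact (isOneSubgaussian_mgf (hsubX n) t).1
    | inr n =>
      refine ((isOneSubgaussian_mgf (hsubY n) (-t)).1).congr
        (Filter.Eventually.of_forall fun ω => ?_)
      simp [g, neg_mul, mul_neg]
  set EX := ∫ ω, X 0 ω ∂μ with hEX
  set EY := ∫ ω, Y 0 ω ∂μ with hEY
  have hΔ' : Δ = EX - EY := by
    rw [hΔ, integral_sub (hsubX 0).1 (hsubY 0).1]
  have hmgf : ∀ t : ℝ, mgf (∑ i ∈ F, g i) μ t ≤ Real.exp ((s:ℝ) * t^2 + t * ((s:ℝ) * Δ)) := by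
    intro t
    rw [hg_indep.mgf_sum hg_meas F]
    set B : ℕ ⊕ ℕ → ℝ := Sum.elim (fun _ => Real.exp (t^2/2 + t * EX))
      (fun _ => Real.exp (t^2/2 + (-t) * EY)) with hB
    have hBle : ∀ i ∈ F, mgf (g i) μ t ≤ B i := by
      rintro (n | n) _
      · have h := (isOneSubgaussian_mgf (hsubX n) t).2
        rwa [(hidentX n).integral_eq, ← hEX] at h
      · have h := (isOneSubgaussian_mgf (hsubY n) (-t)).2
        rw [(hidentY n).integral_eq, ← hEY] at h
        have hneg : mgf (g (Sum.inr n)) μ t = mgf (Y n) μ (-t) := by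
          rw [show g (Sum.inr n) = -(Y n) from rfl, mgf_neg]
        rw [hneg]
        simpa [hB, neg_mul] using h
    calc ∏ i ∈ F, mgf (g i) μ t ≤ ∏ i ∈ F, B i :=
          Finset.prod_le_prod (fun i _ => mgf_nonneg) hBle
      _ = Real.exp ((s:ℝ) * t^2 + t * ((s:ℝ) * Δ)) := by
          rw [hF, Finset.prod_union hdisj, Finset.prod_map, Finset.prod_map]
          simp only [hB, Sum.elim_inl, Sum.elim_inr, Function.Embedding.coeFn_mk]
          rw [Finset.prod_const, Finset.prod_const, Finset.card_range,
            ← Real.exp_nat_mul, ← Real.exp_nat_mul, ← Real.exp_add]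
          congr 1
          rw [hΔ']; ring
  set t : ℝ := -(Δ - e)/2 with ht_def
  have ht : t ≤ 0 := by rw [ht_def]; linarith
  have hintS : Integrable (fun ω => Real.exp (t * (∑ i ∈ F, g i) ω)) μ :=
    hg_indep.integrable_exp_mul_sum hg_meas (fun i _ => hint t i)
  have hcher := measure_le_le_exp_mul_mgf (μ := μ) (X := ∑ i ∈ F, g i) ((s:ℝ) * e) ht hintS
  have hfinal : (μ {ω | (∑ i ∈ F, g i) ω ≤ (s:ℝ) * e}).toReal
      ≤ Real.exp (-(s : ℝ) * (Δ - e) ^ 2 / 4) := by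
    refine hcher.trans ?_
    calc Real.exp (-t * ((s:ℝ) * e)) * mgf (∑ i ∈ F, g i) μ t
        ≤ Real.exp (-t * ((s:ℝ) * e)) * Real.exp ((s:ℝ) * t^2 + t * ((s:ℝ) * Δ)) :=
          mul_le_mul_of_nonneg_left (hmgf t) (Real.exp_nonneg _)
      _ = Real.exp (-(s : ℝ) * (Δ - e) ^ 2 / 4) := by
          rw [← Real.exp_add]
          congr 1
          rw [ht_def]; ring
  rw [hset]
  exact (ENNReal.le_ofReal_iff_toReal_le (measure_ne_top μ _) (Real.exp_pos _).le).2 hfinal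

lemma integral_G_le {Δ c : ℝ} (hΔ : 0 < Δ) (hc : 0 ≤ c) {a b : ℝ} (hab : a ≤ b)
    (ha : 8 * c / Δ ^ 2 ≤ a) :
    ∫ x in a..b, Real.exp (-(Δ * Real.sqrt x - Real.sqrt (8 * c)) ^ 2 / 4)
      ≤ (4 + 2 * Real.sqrt (8 * Real.pi * c)) / Δ ^ 2 := by
  set B := Real.sqrt (8 * c) with hB
  have hB0 : 0 ≤ B := Real.sqrt_nonneg _
  have ha0 : 0 ≤ a := le_trans (by positivity) ha
  have hb0 : 0 ≤ b := le_trans ha0 hab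
  have hBa : B ≤ Δ * Real.sqrt a := by
    rw [hB]
    have h8 : 8 * c ≤ Δ ^ 2 * a := by
      rw [div_le_iff₀ (by positivity)] at ha; linarith
    calc Real.sqrt (8 * c) ≤ Real.sqrt (Δ ^ 2 * a) := Real.sqrt_le_sqrt h8
      _ = Δ * Real.sqrt a := by
          rw [Real.sqrt_mul (by positivity), Real.sqrt_sq hΔ.le]
  set f : ℝ → ℝ := fun u => ((u + B) / Δ) ^ 2 with hf
  set f' : ℝ → ℝ := fun u => 2 * (u + B) / Δ ^ 2 with hf'
  set G : ℝ → ℝ := fun x => Real.exp (-(Δ * Real.sqrt x - B) ^ 2 / 4) with hG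
  set α := Δ * Real.sqrt a - B with hα
  set β := Δ * Real.sqrt b - B with hβ
  have hα0 : 0 ≤ α := by rw [hα]; linarith
  have hαβ : α ≤ β := by
    have : Real.sqrt a ≤ Real.sqrt b := Real.sqrt_le_sqrt hab
    rw [hα, hβ]; nlinarith
  have hderiv : ∀ u ∈ Set.uIcc α β, HasDerivAt f (f' u) u := by
    intro u _
    have h1 : HasDerivAt (fun u : ℝ => (u + B) / Δ) (1 / Δ) u := by
      simpa using ((hasDerivAt_id u).add_const B).div_const Δ
    have h2 := h1.pow 2
    exact h2.congr_deriv (by simp only [hf']; norm_num; ring)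
  have hcont : ContinuousOn f' (Set.uIcc α β) := by fun_prop
  have hGcont : Continuous G := by
    apply Real.continuous_exp.comp
    fun_prop
  have hcv := intervalIntegral.integral_comp_mul_deriv hderiv hcont hGcont
  have hfα : f α = a := by
    rw [hf, hα]; field_simp
    rw [sub_add_cancel, mul_pow, Real.sq_sqrt ha0]
  have hfβ : f β = b := by
    rw [hf, hβ]; field_simp
    rw [sub_add_cancel, mul_pow, Real.sq_sqrt hb0]
  rw [hfα, hfβ] at hcv
  rw [← hcv]
  have hcongr : ∀ u ∈ Set.uIcc α β,
      (G ∘ f) u * f' u = Real.exp (-(1/4) * u ^ 2) * (2 * (u + B) / Δ ^ 2) := by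
    intro u hu
    have hu0 : 0 ≤ u := by
      rw [Set.uIcc_of_le hαβ] at hu
      exact le_trans hα0 hu.1
    have hsq : Real.sqrt (f u) = (u + B) / Δ := by
      rw [hf]; exact Real.sqrt_sq (by positivity)
    have : Δ * Real.sqrt (f u) - B = u := by
      rw [hsq]; field_simp
      ring
    simp only [Function.comp_apply, hG, hf', this]
    congr 1
    ring_nf
  rw [intervalIntegral.integral_congr hcongr]
  -- now bound by the integral over Ioi 0
  set H : ℝ → ℝ := fun u => Real.exp (-(1/4) * u ^ 2) * (2 * (u + B) / Δ ^ 2) with hH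
  have hHint : IntegrableOn H (Set.Ioi 0) := by
    have h1 : Integrable (fun u : ℝ => u * Real.exp (-(1/4) * u ^ 2)) :=
      integrable_mul_exp_neg_mul_sq (b := (1/4:ℝ)) (by norm_num)
    have h2 : Integrable (fun u : ℝ => Real.exp (-(1/4) * u ^ 2)) :=
      integrable_exp_neg_mul_sq (b := (1/4:ℝ)) (by norm_num)
    have : Integrable H := by
      have := ((h1.const_mul (2 / Δ ^ 2)).add (h2.const_mul (2 * B / Δ ^ 2)))
      refine this.congr (Filter.Eventually.of_forall fun x => ?_)
      simp only [Pi.add_apply]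
      rw [hH]; ring
    exact this.integrableOn
  have hH0 : ∀ u ∈ Set.Ioi (0:ℝ), 0 ≤ H u := by
    intro u hu
    have : (0:ℝ) < u := hu
    rw [hH]
    positivity
  have hstep : ∫ u in α..β, H u ≤ ∫ u in Set.Ioi 0, H u := by
    rw [intervalIntegral.integral_of_le hαβ]
    apply setIntegral_mono_set hHint
    · exact (ae_restrict_iff' measurableSet_Ioi).2 (Filter.Eventually.of_forall hH0)
    · refine HasSubset.Subset.eventuallyLE ?_
      intro u hu
      exact lt_of_lt_of_le (lt_of_le_of_lt hα0 hu.1) le_rfl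
  refine hstep.trans ?_
  have hval : ∫ u in Set.Ioi (0:ℝ), H u = (4 + 2 * Real.sqrt (8 * Real.pi * c)) / Δ ^ 2 := by
    have h1 : IntegrableOn (fun u : ℝ => (2 / Δ ^ 2) * (u * Real.exp (-(1/4) * u ^ 2)))
        (Set.Ioi 0) := by
      apply Integrable.integrableOn
      exact (integrable_mul_exp_neg_mul_sq (b := (1/4:ℝ)) (by norm_num)).const_mul _
    have h2 : IntegrableOn (fun u : ℝ => (2 * B / Δ ^ 2) * Real.exp (-(1/4) * u ^ 2))
        (Set.Ioi 0) := by
      apply Integrable.integrableOn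
      exact (integrable_exp_neg_mul_sq (b := (1/4:ℝ)) (by norm_num)).const_mul _
    have hsplit : ∀ u : ℝ, H u = (2 / Δ ^ 2) * (u * Real.exp (-(1/4) * u ^ 2))
        + (2 * B / Δ ^ 2) * Real.exp (-(1/4) * u ^ 2) := by
      intro u; rw [hH]; ring
    rw [show H = fun u => (2 / Δ ^ 2) * (u * Real.exp (-(1/4) * u ^ 2))
        + (2 * B / Δ ^ 2) * Real.exp (-(1/4) * u ^ 2) from funext hsplit]
    rw [integral_add h1 h2, MeasureTheory.integral_const_mul, MeasureTheory.integral_const_mul, int_gauss, int_mul_gauss]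
    have hBpi : B * Real.sqrt Real.pi = Real.sqrt (8 * Real.pi * c) := by
      rw [hB, ← Real.sqrt_mul (by positivity)]
      congr 1
      ring
    rw [← hBpi]
    field_simp
    ring
  rw [hval]

lemma sum_phi_le {Δ c : ℝ} (hΔ : 0 < Δ) (hc : 0 ≤ c) (N m : ℕ)
    (hm1 : (8 * c + 2) / Δ ^ 2 ≤ (m : ℝ)) (hm2 : (m : ℝ) ≤ (8 * c + 2) / Δ ^ 2 + 1)
    (φ : ℕ → ℝ) (hφ1 : ∀ s, s ≤ m → φ s = 1)
    (hφ2 : ∀ s : ℕ, m < s →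
      φ s = Real.exp (-(Δ * Real.sqrt s - Real.sqrt (8 * c)) ^ 2 / 4)) :
    ∑ s ∈ Finset.Icc 1 N, φ s
      ≤ 1 + 8 * c / Δ ^ 2 + 6 / Δ ^ 2 + 2 * Real.sqrt (8 * Real.pi * c) / Δ ^ 2 := by
  have hΔ2 : (0:ℝ) < Δ ^ 2 := by positivity
  set S := Real.sqrt (8 * Real.pi * c) with hS
  have hS0 : 0 ≤ S := Real.sqrt_nonneg _
  set G : ℝ → ℝ := fun x => Real.exp (-(Δ * Real.sqrt x - Real.sqrt (8 * c)) ^ 2 / 4) with hG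
  have hm8 : 8 * c / Δ ^ 2 ≤ (m:ℝ) := le_trans (by gcongr; linarith) hm1
  have hmB : Real.sqrt (8 * c) ≤ Δ * Real.sqrt m := by
    have h8 : 8 * c ≤ Δ ^ 2 * m := by rw [div_le_iff₀ hΔ2] at hm8; linarith
    calc Real.sqrt (8 * c) ≤ Real.sqrt (Δ ^ 2 * m) := Real.sqrt_le_sqrt h8
      _ = Δ * Real.sqrt m := by rw [Real.sqrt_mul (by positivity), Real.sqrt_sq hΔ.le]
  have hmle : (m:ℝ) ≤ 1 + 8 * c / Δ ^ 2 + 2 / Δ ^ 2 := by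
    have : (8 * c + 2) / Δ ^ 2 = 8 * c / Δ ^ 2 + 2 / Δ ^ 2 := by ring
    linarith
  rcases le_or_gt N m with hNm | hmN
  · have hsum : ∑ s ∈ Finset.Icc 1 N, φ s = (N : ℝ) := by
      rw [Finset.sum_congr rfl (fun s hs => hφ1 s (le_trans (Finset.mem_Icc.1 hs).2 hNm))]
      rw [Finset.sum_const, Nat.card_Icc]
      simp
    rw [hsum]
    have hNmr : (N:ℝ) ≤ (m:ℝ) := by exact_mod_cast hNm
    have h4 : (0:ℝ) ≤ 4 / Δ ^ 2 := by positivity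
    have h2S : (0:ℝ) ≤ 2 * S / Δ ^ 2 := by positivity
    have e3 : 2 / Δ ^ 2 + 4 / Δ ^ 2 = 6 / Δ ^ 2 := by ring
    linarith
  · have hAnti : AntitoneOn G (Set.Icc (m:ℝ) (N:ℝ)) := by
      intro x hx y hy hxy
      have hx0 : (0:ℝ) ≤ x := le_trans (Nat.cast_nonneg m) hx.1
      have hBx : Real.sqrt (8 * c) ≤ Δ * Real.sqrt x :=
        le_trans hmB (by gcongr; exact hx.1)
      have hxy' : Δ * Real.sqrt x ≤ Δ * Real.sqrt y := by gcongr
      have hsq : (Δ * Real.sqrt x - Real.sqrt (8 * c)) ^ 2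
          ≤ (Δ * Real.sqrt y - Real.sqrt (8 * c)) ^ 2 := by nlinarith [hBx, hxy']
      exact Real.exp_le_exp.2 (by linarith)
    have hdisj : Disjoint (Finset.Ioc 0 m) (Finset.Ioc m N) := by
      rw [Finset.disjoint_left]
      intro a ha hb
      rw [Finset.mem_Ioc] at ha hb
      omega
    have hsplit : ∑ s ∈ Finset.Icc 1 N, φ s
        = (∑ s ∈ Finset.Ioc 0 m, φ s) + ∑ s ∈ Finset.Ioc m N, φ s := by
      have hU : Finset.Icc 1 N = Finset.Ioc 0 m ∪ Finset.Ioc m N := by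
        rw [Finset.Ioc_union_Ioc_eq_Ioc (Nat.zero_le m) hmN.le, ← Finset.Icc_add_one_left_eq_Ioc, zero_add]
      rw [hU, Finset.sum_union hdisj]
    have hsum1 : ∑ s ∈ Finset.Ioc 0 m, φ s = (m : ℝ) := by
      rw [Finset.sum_congr rfl (fun s hs => hφ1 s (Finset.mem_Ioc.1 hs).2)]
      rw [Finset.sum_const, Nat.card_Ioc]
      simp
    have hsum2 : ∑ s ∈ Finset.Ioc m N, φ s = ∑ i ∈ Finset.Ico m N, G ((i + 1 : ℕ) : ℝ) := by
      rw [Finset.sum_congr rfl (fun s hs => hφ2 s (Finset.mem_Ioc.1 hs).1)]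
      rw [← Finset.Ico_add_one_add_one_eq_Ioc, Finset.sum_Ico_eq_sum_range, Finset.sum_Ico_eq_sum_range,
        Nat.add_sub_add_right]
      refine Finset.sum_congr rfl fun i _ => ?_
      rw [hG]
      norm_num
      congr 2
      push_cast
      ring
    have htail : ∑ i ∈ Finset.Ico m N, G ((i + 1 : ℕ) : ℝ) ≤ ∫ x in (m:ℝ)..(N:ℝ), G x :=
      AntitoneOn.sum_le_integral_Ico hmN.le hAnti
    have hNr : (m:ℝ) ≤ (N:ℝ) := by exact_mod_cast hmN.le
    have hInt : ∫ x in (m:ℝ)..(N:ℝ), G x ≤ (4 + 2 * S) / Δ ^ 2 := by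
      rw [hG, hS]
      exact integral_G_le hΔ hc hNr hm8
    have e1 : (4 + 2 * S) / Δ ^ 2 = 4 / Δ ^ 2 + 2 * S / Δ ^ 2 := by ring
    have e3 : 2 / Δ ^ 2 + 4 / Δ ^ 2 = 6 / Δ ^ 2 := by ring
    rw [hsplit, hsum1, hsum2]
    linarith


set_option maxHeartbeats 1000000 in
/-- Let `T₁ ≤ T` be positive integers, `X₁, X₂, …` i.i.d. 1-subgaussian, `Y₁, Y₂, …`
i.i.d. 1-subgaussian and independent of the `X`'s, with `Δ = E[X₁ − Y₁] > 0`.  With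
`X̄ₛ, Ȳₛ` the empirical means,
`∑_{s=1}^{⌊T/2⌋} P(X̄ₛ − Ȳₛ ≤ √((8/s)·log⁺(T₁/(2s))))
  ≤ 1 + 8·log⁺(T₁Δ²/4)/Δ² + 6/Δ² + 2√(8π·log⁺(T₁Δ²/4))/Δ²`. -/
theorem stmt18 {Ω : Type*} [MeasurableSpace Ω] (μ : Measure Ω) [IsProbabilityMeasure μ]
    (X Y : ℕ → Ω → ℝ) (hmeasX : ∀ i, Measurable (X i)) (hmeasY : ∀ i, Measurable (Y i))
    (hindep : iIndepFun (Sum.elim X Y) μ)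
    (hidentX : ∀ i, IdentDistrib (X i) (X 0) μ μ)
    (hidentY : ∀ i, IdentDistrib (Y i) (Y 0) μ μ)
    (hsubX : ∀ i, IsOneSubgaussian μ (X i))
    (hsubY : ∀ i, IsOneSubgaussian μ (Y i))
    (T T₁ : ℕ) (hT₁ : 0 < T₁) (hT₁T : T₁ ≤ T)
    (Δ : ℝ) (hΔ : Δ = ∫ ω, (X 0 ω - Y 0 ω) ∂μ) (hΔpos : 0 < Δ) :
    (∑ s ∈ Finset.Icc 1 (T / 2),
        μ {ω | (∑ n ∈ Finset.range s, X n ω) / s - (∑ n ∈ Finset.range s, Y n ω) / s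
            ≤ Real.sqrt ((8 / s) * logPlus ((T₁ : ℝ) / (2 * s)))}) ≤
      ENNReal.ofReal (1 + 8 * logPlus (T₁ * Δ ^ 2 / 4) / Δ ^ 2 + 6 / Δ ^ 2
        + 2 * Real.sqrt (8 * Real.pi * logPlus (T₁ * Δ ^ 2 / 4)) / Δ ^ 2) := by
  have hΔ2 : (0:ℝ) < Δ ^ 2 := by positivity
  set c := logPlus ((T₁:ℝ) * Δ ^ 2 / 4) with hc_def
  have hc : 0 ≤ c := logPlus_nonneg _
  set m : ℕ := ⌈(8 * c + 2) / Δ ^ 2⌉₊ with hm_def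
  have hm1 : (8 * c + 2) / Δ ^ 2 ≤ (m:ℝ) := Nat.le_ceil _
  have hm2 : (m:ℝ) ≤ (8 * c + 2) / Δ ^ 2 + 1 := (Nat.ceil_lt_add_one (by positivity)).le
  set N := T / 2 with hN
  set G : ℝ → ℝ := fun x => Real.exp (-(Δ * Real.sqrt x - Real.sqrt (8 * c)) ^ 2 / 4) with hG
  set φ : ℕ → ℝ := fun s => if s ≤ m then 1 else G s with hφ
  have hφnn : ∀ s, 0 ≤ φ s := by
    intro s
    rw [hφ]
    dsimp only
    split
    · norm_num
    · exact (Real.exp_pos _).le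
  have hφ1 : ∀ s, s ≤ m → φ s = 1 := by
    intro s hs; rw [hφ]; simp [hs]
  have hφ2 : ∀ s : ℕ, m < s →
      φ s = Real.exp (-(Δ * Real.sqrt s - Real.sqrt (8 * c)) ^ 2 / 4) := by
    intro s hs; rw [hφ]; simp [Nat.not_le.2 hs, hG]
  have hT₁pos : (0:ℝ) < (T₁:ℝ) := by exact_mod_cast hT₁
  have key : ∀ s ∈ Finset.Icc 1 N,
      μ {ω | (∑ n ∈ Finset.range s, X n ω) / s - (∑ n ∈ Finset.range s, Y n ω) / s
          ≤ Real.sqrt ((8 / s) * logPlus ((T₁ : ℝ) / (2 * s)))}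
        ≤ ENNReal.ofReal (φ s) := by
    intro s hs
    obtain ⟨hs1, _⟩ := Finset.mem_Icc.1 hs
    by_cases hsm : s ≤ m
    · rw [hφ1 s hsm, ENNReal.ofReal_one]
      exact prob_le_one
    · push_neg at hsm
      set L := logPlus ((T₁:ℝ) / (2 * s)) with hL
      have hLnn : 0 ≤ L := logPlus_nonneg _
      have hspos : (0:ℝ) < (s:ℝ) := by exact_mod_cast hs1
      have hsr : (8 * c + 2) / Δ ^ 2 < (s:ℝ) := lt_of_le_of_lt hm1 (by exact_mod_cast hsm)
      have hs2 : 2 ≤ Δ ^ 2 * (s:ℝ) := by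
        rw [div_lt_iff₀ hΔ2] at hsr; nlinarith
      have hsc : 8 * c ≤ Δ ^ 2 * (s:ℝ) := by
        rw [div_lt_iff₀ hΔ2] at hsr; nlinarith
      have hLc : L ≤ c := by
        rw [hL, hc_def]
        apply logPlus_mono (by positivity)
        rw [div_le_div_iff₀ (by positivity) (by norm_num)]
        nlinarith
      set e := Real.sqrt ((8 / s) * logPlus ((T₁ : ℝ) / (2 * s))) with he
      have he_nn : 0 ≤ e := Real.sqrt_nonneg _
      have hse : Real.sqrt s * e = Real.sqrt (8 * L) := by
        rw [he, ← hL, ← Real.sqrt_mul hspos.le]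
        congr 1
        field_simp
      have hse' : Real.sqrt s * e ≤ Real.sqrt (8 * c) := by
        rw [hse]; exact Real.sqrt_le_sqrt (by linarith)
      have hΔs : Real.sqrt (8 * c) ≤ Δ * Real.sqrt s := by
        calc Real.sqrt (8 * c) ≤ Real.sqrt (Δ ^ 2 * s) := Real.sqrt_le_sqrt hsc
          _ = Δ * Real.sqrt s := by rw [Real.sqrt_mul (by positivity), Real.sqrt_sq hΔpos.le]
      have hsq_pos : 0 < Real.sqrt (s:ℝ) := Real.sqrt_pos.2 hspos
      have heΔ : e ≤ Δ := by
        have h1 : Real.sqrt s * e ≤ Δ * Real.sqrt s := hse'.trans hΔs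
        nlinarith
      have hconc := concentration μ X Y hmeasX hmeasY hindep hidentX hidentY hsubX hsubY
        Δ hΔ s hs1 e heΔ
      have hexp : Real.exp (-(s:ℝ) * (Δ - e) ^ 2 / 4) ≤ G (s:ℝ) := by
        rw [hG]
        apply Real.exp_le_exp.2
        have h0 : 0 ≤ Δ * Real.sqrt s - Real.sqrt (8 * c) := by linarith
        have h1 : Δ * Real.sqrt s - Real.sqrt (8 * c) ≤ Real.sqrt s * (Δ - e) := by
          nlinarith
        have h2 : (Δ * Real.sqrt s - Real.sqrt (8 * c)) ^ 2
            ≤ (Real.sqrt s * (Δ - e)) ^ 2 := by nlinarith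
        have h3 : (Real.sqrt s * (Δ - e)) ^ 2 = (s:ℝ) * (Δ - e) ^ 2 := by
          rw [mul_pow, Real.sq_sqrt hspos.le]
        rw [h3] at h2
        linarith
      rw [hφ2 s hsm]
      exact hconc.trans (ENNReal.ofReal_le_ofReal hexp)
  calc (∑ s ∈ Finset.Icc 1 N,
        μ {ω | (∑ n ∈ Finset.range s, X n ω) / s - (∑ n ∈ Finset.range s, Y n ω) / s
            ≤ Real.sqrt ((8 / s) * logPlus ((T₁ : ℝ) / (2 * s)))})
      ≤ ∑ s ∈ Finset.Icc 1 N, ENNReal.ofReal (φ s) := Finset.sum_le_sum key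
    _ = ENNReal.ofReal (∑ s ∈ Finset.Icc 1 N, φ s) :=
        (ENNReal.ofReal_sum_of_nonneg (fun i _ => hφnn i)).symm
    _ ≤ ENNReal.ofReal (1 + 8 * c / Δ ^ 2 + 6 / Δ ^ 2
        + 2 * Real.sqrt (8 * Real.pi * c) / Δ ^ 2) :=
        ENNReal.ofReal_le_ofReal (sum_phi_le hΔpos hc N m hm1 hm2 φ hφ1 hφ2)
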